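/- Let p : ℝ → ℝ be a 2π-periodic function of class C² satisfying ∫₀^{2π} p(φ)cos φ dφ = 0 and ∫₀^{2π} p(φ)sin φ dφ = 0, and suppose there is a constant w such that p(φ) + p(φ + π) = w for all φ. Let a₀ = (1/(2π))∫₀^{2π} p dφ, F = ½∫₀^{2π}(p² − p'²) dφ, A = ½∫₀^{2π} p² dφ and δ₂² = ∫₀^{2π}(p(φ) − a₀)² dφ. Then (32/9)π(A − F) ≥ 16π δ₂²; equivalently, ∫₀^{2π} p'(φ)² dφ ≥ 9∫₀^{2π}(p(φ) − a₀)² dφ. -/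

import Mathlib

open Real MeasureTheory Complex intervalIntegral

open scoped ENNReal
open ContinuousMap AddCircle

lemma parseval_lift {T : ℝ} [hT : Fact (0 < T)] (r : ℝ → ℝ) (hr : Continuous r)
    (hup : Function.Periodic (fun x : ℝ => (r x : ℂ)) T) :
    Summable (fun n : ℤ => ‖fourierCoeff hup.lift n‖ ^ 2) ∧
      ∑' n : ℤ, ‖fourierCoeff hup.lift n‖ ^ 2 = (1 / T) * ∫ x in (0:ℝ)..T, r x ^ 2 := by
  have hW_cont : Continuous hup.lift :=
    continuous_coinduced_dom.mpr (Complex.continuous_ofReal.comp hr)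
  set WC : C(AddCircle T, ℂ) := ⟨hup.lift, hW_cont⟩ with hWC_def
  set WLp : Lp ℂ 2 (@AddCircle.haarAddCircle T _) :=
    ContinuousMap.toLp (E := ℂ) 2 AddCircle.haarAddCircle ℂ WC with hWLp_def
  have hcoeff : ∀ n : ℤ, fourierCoeff (WLp : AddCircle T → ℂ) n = fourierCoeff hup.lift n := by
    intro n
    rw [hWLp_def, fourierCoeff_toLp]
    rfl
  -- summability
  have hsumm : Summable (fun n : ℤ => ‖fourierCoeff hup.lift n‖ ^ 2) := by
    have hmem : Memℓp (fun n : ℤ => fourierBasis.repr WLp n) 2 := (fourierBasis.repr WLp).prop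
    have := hmem.summable (p := 2) (by norm_num)
    simp only [fourierBasis_repr] at this
    rw [show ((2:ℝ≥0∞)).toReal = (2:ℝ) by norm_num] at this
    have h2 : ∀ x : ℝ, x ^ (2:ℝ) = x ^ (2:ℕ) := fun x => by
      rw [← Real.rpow_natCast x 2]; norm_num
    simp only [h2] at this
    simpa only [hcoeff] using this
  refine ⟨hsumm, ?_⟩
  have hpars := tsum_sq_fourierCoeff WLp
  simp only [hcoeff] at hpars
  rw [hpars]
  -- convert the integral
  have hae : (WLp : AddCircle T → ℂ) =ᵐ[AddCircle.haarAddCircle] WC :=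
    ContinuousMap.coeFn_toLp _ _
  have h1 : ∫ t : AddCircle T, ‖(WLp : AddCircle T → ℂ) t‖ ^ 2 ∂AddCircle.haarAddCircle
      = ∫ t : AddCircle T, ‖hup.lift t‖ ^ 2 ∂AddCircle.haarAddCircle := by
    apply MeasureTheory.integral_congr_ae
    filter_upwards [hae] with t ht
    rw [ht]; rfl
  have h2 : ∫ t : AddCircle T, ‖hup.lift t‖ ^ 2
      = T * ∫ t : AddCircle T, ‖hup.lift t‖ ^ 2 ∂AddCircle.haarAddCircle := by
    rw [AddCircle.volume_eq_smul_haarAddCircle, MeasureTheory.integral_smul_measure,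
      ENNReal.toReal_ofReal hT.out.le, smul_eq_mul]
  have h3 : ∫ x in (0:ℝ)..(0 + T), ‖hup.lift ((x : ℝ) : AddCircle T)‖ ^ 2
      = ∫ t : AddCircle T, ‖hup.lift t‖ ^ 2 :=
    AddCircle.intervalIntegral_preimage T 0 (fun t => ‖hup.lift t‖ ^ 2)
  have h4 : ∫ x in (0:ℝ)..(0 + T), ‖hup.lift ((x : ℝ) : AddCircle T)‖ ^ 2
      = ∫ x in (0:ℝ)..T, r x ^ 2 := by
    rw [zero_add]
    apply intervalIntegral.integral_congr
    intro x _
    show ‖hup.lift ((x : ℝ) : AddCircle T)‖ ^ 2 = r x ^ 2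
    rw [hup.lift_coe x, Complex.norm_real, Real.norm_eq_abs]
    exact sq_abs (r x)
  have hTne : T ≠ 0 := hT.out.ne'
  rw [h1, ← h4, h3, h2]
  field_simp

section core

variable (p : ℝ → ℝ)

-- core analytic lemma
theorem wirtinger3
    (hper : Function.Periodic p (2 * π))
    (hC2 : ContDiff ℝ 2 p)
    (hcos : ∫ φ in (0:ℝ)..(2 * π), p φ * Real.cos φ = 0)
    (hsin : ∫ φ in (0:ℝ)..(2 * π), p φ * Real.sin φ = 0)
    (w : ℝ) (hwidth : ∀ φ, p φ + p (φ + π) = w)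
    (a₀ : ℝ) (ha₀ : a₀ = (1 / (2 * π)) * ∫ φ in (0:ℝ)..(2 * π), p φ) :
    (∫ φ in (0:ℝ)..(2 * π), (deriv p φ) ^ 2) ≥
      9 * ∫ φ in (0:ℝ)..(2 * π), (p φ - a₀) ^ 2 := by
  have hπ : (0:ℝ) < π := Real.pi_pos
  have hT : (0:ℝ) < 2 * π := by positivity
  haveI : Fact ((0:ℝ) < 2 * π) := ⟨hT⟩
  have hp_cont : Continuous p := hC2.continuous
  have hp_diff : Differentiable ℝ p := hC2.differentiable (by norm_num)
  have hp'_cont : Continuous (deriv p) := hC2.continuous_deriv one_le_two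
  -- the derivative is periodic
  have hp'_per : Function.Periodic (deriv p) (2 * π) := by
    intro x
    have : p = fun y => p (y + 2 * π) := by funext y; rw [hper y]
    calc deriv p (x + 2 * π) = deriv (fun y => p (y + 2 * π)) x := by
          rw [deriv_comp_add_const]
      _ = deriv p x := by rw [← this]
  -- w = 2 a₀
  have hInt_p : ∀ a b : ℝ, IntervalIntegrable p volume a b :=
    fun a b => hp_cont.intervalIntegrable a b
  have hw : w = 2 * a₀ := by
    have h1 : ∫ φ in (0:ℝ)..(2 * π), p (φ + π) = ∫ φ in (0:ℝ)..(2 * π), p φ := by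
      rw [intervalIntegral.integral_comp_add_right]
      have h := hper.intervalIntegral_add_eq π 0
      rw [show (2:ℝ) * π + π = π + 2 * π by ring]
      simpa using h
    have h2 : (∫ φ in (0:ℝ)..(2 * π), p φ) + (∫ φ in (0:ℝ)..(2 * π), p (φ + π))
        = w * (2 * π) := by
      have hi2 : IntervalIntegrable (fun φ => p (φ + π)) volume 0 (2*π) := by
        apply Continuous.intervalIntegrable; fun_prop
      rw [← intervalIntegral.integral_add (hInt_p 0 (2*π)) hi2]
      simp_rw [hwidth]
      simp [mul_comm]
    rw [h1] at h2
    have hne : (2:ℝ) * π ≠ 0 := hT.ne'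
    rw [ha₀]
    field_simp
    linarith [h2]
  -- g and its antiperiodicity
  set g : ℝ → ℝ := fun x => p x - a₀ with hg_def
  have hg_anti : ∀ x, g (x + π) = - g x := by
    intro x
    have := hwidth x
    simp only [hg_def, hw] at *
    linarith
  have hg_per : Function.Periodic g (2 * π) := fun x => by simp [hg_def, hper x]
  have hg_cont : Continuous g := hp_cont.sub continuous_const
  -- complexifications
  set u : ℝ → ℂ := fun x => (g x : ℂ) with hu_def
  have hu_cont : Continuous u := Complex.continuous_ofReal.comp hg_cont
  have hu_per : Function.Periodic u (2 * π) := fun x => by simp [hu_def, hg_per x]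
  have hu_anti : ∀ x, u (x + π) = - u x := fun x => by
    simp only [hu_def, hg_anti x, Complex.ofReal_neg]
  set v : ℝ → ℂ := fun x => ((deriv p) x : ℂ) with hv_def
  have hv_cont : Continuous v := Complex.continuous_ofReal.comp hp'_cont
  have hv_per : Function.Periodic v (2 * π) := fun x => by simp [hv_def, hp'_per x]
  have huv : ∀ x, HasDerivAt u (v x) x := fun x =>
    (((hp_diff x).hasDerivAt.sub_const a₀)).ofReal_comp
  -- lifts to the circle
  set U : AddCircle (2 * π) → ℂ := hu_per.lift with hU_def
  set V : AddCircle (2 * π) → ℂ := hv_per.lift with hV_def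
  have hU_coe : ∀ x : ℝ, U (x : AddCircle (2 * π)) = u x := fun x => hu_per.lift_coe x
  have hV_coe : ∀ x : ℝ, V (x : AddCircle (2 * π)) = v x := fun x => hv_per.lift_coe x
  have hU_cont : Continuous U := continuous_coinduced_dom.mpr hu_cont
  have hV_cont : Continuous V := continuous_coinduced_dom.mpr hv_cont
  have hUIoc : AddCircle.liftIoc (2 * π) 0 u = U := by
    funext z
    obtain ⟨⟨x, hx⟩, rfl⟩ : ∃ y : Set.Ioc (0:ℝ) (0 + 2 * π),
        ((y : ℝ) : AddCircle (2 * π)) = z :=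
      ⟨AddCircle.equivIoc (2 * π) 0 z, (AddCircle.equivIoc (2 * π) 0).symm_apply_apply z⟩
    rw [AddCircle.liftIoc_coe_apply hx, hU_coe]
  have hVIoc : AddCircle.liftIoc (2 * π) 0 v = V := by
    funext z
    obtain ⟨⟨x, hx⟩, rfl⟩ : ∃ y : Set.Ioc (0:ℝ) (0 + 2 * π),
        ((y : ℝ) : AddCircle (2 * π)) = z :=
      ⟨AddCircle.equivIoc (2 * π) 0 z, (AddCircle.equivIoc (2 * π) 0).symm_apply_apply z⟩
    rw [AddCircle.liftIoc_coe_apply hx, hV_coe]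
  -- Fourier coefficients
  set c : ℤ → ℂ := fun n => fourierCoeff U n with hc_def
  set d : ℤ → ℂ := fun n => fourierCoeff V n with hd_def
  have h02 : (0:ℝ) < 0 + 2 * π := lt_add_of_pos_right 0 hT
  have hcOn : ∀ n, c n = fourierCoeffOn h02 u n := fun n => by
    rw [hc_def]; dsimp only; rw [← hUIoc]; exact fourierCoeff_liftIoc_eq u n
  have hdOn : ∀ n, d n = fourierCoeffOn h02 v n := fun n => by
    rw [hd_def]; dsimp only; rw [← hVIoc]; exact fourierCoeff_liftIoc_eq v n
  have hInt_v : IntervalIntegrable v volume 0 (0 + 2 * π) := hv_cont.intervalIntegrable _ _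
  have hπc : (π : ℂ) ≠ 0 := Complex.ofReal_ne_zero.mpr hπ.ne'
  -- d n = I n c n
  have hdc : ∀ n : ℤ, d n = Complex.I * n * c n := by
    intro n
    rcases eq_or_ne n 0 with rfl | hn
    · rw [hdOn 0, fourierCoeffOn_eq_integral]
      have hfc : ∀ x : ℝ, fourier (-(0:ℤ)) (x : AddCircle (0 + 2 * π - 0)) • v x = v x := by
        intro x; rw [neg_zero, fourier_zero, one_smul]
      simp only [hfc]
      have hintv : ∫ x in (0:ℝ)..(0 + 2 * π), v x
          = ((∫ x in (0:ℝ)..(0 + 2 * π), deriv p x : ℝ) : ℂ) := by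
        rw [← intervalIntegral.integral_ofReal]
      have hftc : ∫ x in (0:ℝ)..(0 + 2 * π), deriv p x = p (0 + 2 * π) - p 0 := by
        apply intervalIntegral.integral_deriv_eq_sub
        · exact fun x _ => hp_diff x
        · exact hp'_cont.intervalIntegrable _ _
      rw [hintv, hftc, hper 0, sub_self]
      simp
    · have key := fourierCoeffOn_of_hasDerivAt h02 hn (fun x _ => huv x) hInt_v
      rw [← hcOn, ← hdOn] at key
      have h0 : u (0 + 2 * π) - u 0 = 0 := by rw [hu_per 0, sub_self]
      rw [h0, mul_zero, zero_sub] at key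
      rw [key]
      have hn' : (n : ℂ) ≠ 0 := Int.cast_ne_zero.mpr hn
      have hI : Complex.I ≠ 0 := Complex.I_ne_zero
      push_cast
      field_simp
      ring
  -- explicit integral formula for c n
  have hfour : ∀ (n : ℤ) (x : ℝ), fourier (-n) (x : AddCircle (2 * π))
      = Complex.exp (-(↑n * ↑x) * Complex.I) := by
    intro n x
    rw [fourier_coe_apply]
    congr 1
    push_cast
    field_simp
  have hcInt : ∀ n : ℤ, c n
      = (1 / (2 * π) : ℝ) • ∫ x in (0:ℝ)..(2 * π), Complex.exp (-(↑n * ↑x) * Complex.I) * u x := by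
    intro n
    rw [hc_def]; dsimp only
    rw [fourierCoeff_eq_intervalIntegral U n 0]
    rw [zero_add]
    congr 1
    apply intervalIntegral.integral_congr
    intro x _
    show (fourier (-n)) ((x : ℝ) : AddCircle (2 * π)) • U ((x : ℝ) : AddCircle (2 * π)) = _
    rw [hU_coe, hfour, smul_eq_mul]
  have hexp_cont : ∀ n : ℤ, Continuous fun x : ℝ => Complex.exp (-(↑n * ↑x) * Complex.I) := by
    intro n
    apply Complex.continuous_exp.comp
    fun_prop
  -- vanishing of even coefficients via antiperiodicity
  have hJ : ∀ n : ℤ, Complex.exp (-(↑n * ↑π) * Complex.I) = 1 → c n = 0 := by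
    intro n hexp
    rw [hcInt n]
    set f : ℝ → ℂ := fun x => Complex.exp (-(↑n * ↑x) * Complex.I) * u x with hf_def
    have hf_cont : Continuous f := (hexp_cont n).mul hu_cont
    have hf_anti : ∀ x, f (x + π) = - f x := by
      intro x
      have he : (-(↑n * (↑x + ↑π)) * Complex.I)
          = (-(↑n * ↑x) * Complex.I) + (-(↑n * ↑π) * Complex.I) := by ring
      simp only [hf_def]
      push_cast
      rw [he, Complex.exp_add, hexp, mul_one, hu_anti x]
      ring
    have hsplit : (∫ x in (0:ℝ)..(2 * π), f x)
        = (∫ x in (0:ℝ)..π, f x) + ∫ x in π..(2 * π), f x :=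
      (intervalIntegral.integral_add_adjacent_intervals
        (hf_cont.intervalIntegrable _ _) (hf_cont.intervalIntegrable _ _)).symm
    have hshift : (∫ x in π..(2 * π), f x) = ∫ x in (0:ℝ)..π, f (x + π) := by
      rw [intervalIntegral.integral_comp_add_right]
      norm_num [two_mul]
    have : (∫ x in (0:ℝ)..π, f (x + π)) = - ∫ x in (0:ℝ)..π, f x := by
      simp only [hf_anti]
      exact intervalIntegral.integral_neg
    rw [hsplit, hshift, this, add_neg_cancel, smul_zero]
  have hc0 : c 0 = 0 := hJ 0 (by norm_num)
  have hc2 : c 2 = 0 := by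
    apply hJ 2
    push_cast
    rw [show (-((2:ℂ) * ↑π) * Complex.I) = -(2 * ↑π * Complex.I) by ring,
      Complex.exp_neg, Complex.exp_two_pi_mul_I, inv_one]
  have hcm2 : c (-2) = 0 := by
    apply hJ (-2)
    push_cast
    rw [show (-((-2:ℂ) * ↑π) * Complex.I) = 2 * ↑π * Complex.I by ring,
      Complex.exp_two_pi_mul_I]
  -- vanishing of first coefficients
  have hgcos : ∫ x in (0:ℝ)..(2 * π), g x * Real.cos x = 0 := by
    have hx : ∀ x : ℝ, g x * Real.cos x = p x * Real.cos x - a₀ * Real.cos x := by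
      intro x; simp only [hg_def]; ring
    simp only [hx]
    rw [intervalIntegral.integral_sub (f := fun x => p x * Real.cos x) (g := fun x => a₀ * Real.cos x) ((hp_cont.mul Real.continuous_cos).intervalIntegrable _ _)
      ((continuous_const.mul Real.continuous_cos).intervalIntegrable _ _)]
    rw [hcos, intervalIntegral.integral_const_mul, integral_cos]
    simp [Real.sin_two_pi]
  have hgsin : ∫ x in (0:ℝ)..(2 * π), g x * Real.sin x = 0 := by
    have hx : ∀ x : ℝ, g x * Real.sin x = p x * Real.sin x - a₀ * Real.sin x := by
      intro x; simp only [hg_def]; ring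
    simp only [hx]
    rw [intervalIntegral.integral_sub (f := fun x => p x * Real.sin x) (g := fun x => a₀ * Real.sin x) ((hp_cont.mul Real.continuous_sin).intervalIntegrable _ _)
      ((continuous_const.mul Real.continuous_sin).intervalIntegrable _ _)]
    rw [hsin, intervalIntegral.integral_const_mul, integral_sin]
    simp [Real.cos_two_pi]
  have hkey : ∀ n : ℤ, (∫ x in (0:ℝ)..(2 * π), g x * Real.cos (n * x)) = 0 →
      (∫ x in (0:ℝ)..(2 * π), g x * Real.sin (n * x)) = 0 → c n = 0 := by
    intro n hcn hsn
    rw [hcInt n]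
    have hx : ∀ x : ℝ, Complex.exp (-(↑n * ↑x) * Complex.I) * u x
        = ((g x * Real.cos (n * x) : ℝ) : ℂ)
          - Complex.I * ((g x * Real.sin (n * x) : ℝ) : ℂ) := by
      intro x
      have he : (-(↑n * ↑x) * Complex.I) = ((-(n * x) : ℝ) : ℂ) * Complex.I := by
        push_cast; ring
      rw [he, Complex.exp_mul_I, hu_def]
      dsimp only
      rw [← Complex.ofReal_cos, ← Complex.ofReal_sin]
      push_cast [Real.cos_neg, Real.sin_neg]
      ring
    rw [intervalIntegral.integral_congr
      (g := fun x : ℝ => ((g x * Real.cos (n * x) : ℝ) : ℂ)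
        - Complex.I * ((g x * Real.sin (n * x) : ℝ) : ℂ)) (fun x _ => hx x)]
    have hiA : IntervalIntegrable (fun x : ℝ => ((g x * Real.cos (n * x) : ℝ) : ℂ))
        volume 0 (2 * π) := by
      apply Continuous.intervalIntegrable; fun_prop
    have hiB : IntervalIntegrable (fun x : ℝ => Complex.I * ((g x * Real.sin (n * x) : ℝ) : ℂ))
        volume 0 (2 * π) := by
      apply Continuous.intervalIntegrable; fun_prop
    rw [intervalIntegral.integral_sub hiA hiB, intervalIntegral.integral_const_mul,
      intervalIntegral.integral_ofReal, intervalIntegral.integral_ofReal, hcn, hsn]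
    simp
  have hc1 : c 1 = 0 := by
    apply hkey 1
    · simpa using hgcos
    · simpa using hgsin
  have hcm1 : c (-1) = 0 := by
    apply hkey (-1)
    · have : ∀ x : ℝ, g x * Real.cos ((-1 : ℤ) * x) = g x * Real.cos x := by
        intro x; push_cast; rw [neg_one_mul, Real.cos_neg]
      simp only [this]; exact hgcos
    · have : ∀ x : ℝ, g x * Real.sin ((-1 : ℤ) * x) = -(g x * Real.sin x) := by
        intro x; push_cast; rw [neg_one_mul, Real.sin_neg]; ring
      simp only [this]
      rw [intervalIntegral.integral_neg, hgsin, neg_zero]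
  -- Parseval for U and V
  have hpU := parseval_lift g hg_cont hu_per
  have hpV := parseval_lift (deriv p) hp'_cont hv_per
  rw [← hU_def] at hpU
  rw [← hV_def] at hpV
  obtain ⟨hsummU, hsumU⟩ := hpU
  obtain ⟨hsummV, hsumV⟩ := hpV
  simp only [← hc_def] at hsummU hsumU
  simp only [← hd_def] at hsummV hsumV
  -- pointwise comparison of coefficients
  have hterm : ∀ n : ℤ, 9 * ‖c n‖ ^ 2 ≤ ‖d n‖ ^ 2 := by
    intro n
    have hd2 : ‖d n‖ ^ 2 = (n : ℝ) ^ 2 * ‖c n‖ ^ 2 := by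
      rw [hdc n, norm_mul, norm_mul, Complex.norm_I, one_mul, mul_pow]
      congr 1
      rw [show ((n : ℂ)) = ((n : ℝ) : ℂ) by push_cast; rfl, Complex.norm_real,
        Real.norm_eq_abs]
      exact _root_.sq_abs _
    by_cases h : |n| ≤ 2
    · obtain ⟨hn1, hn2⟩ := abs_le.mp h
      have hc_zero : c n = 0 := by interval_cases n <;> assumption
      rw [hd2, hc_zero]
      simp
    · have h3 : (3 : ℝ) ≤ |(n : ℝ)| := by
        have : (3 : ℤ) ≤ |n| := by omega
        calc (3:ℝ) = ((3:ℤ):ℝ) := by norm_num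
          _ ≤ ((|n|:ℤ):ℝ) := by exact_mod_cast this
          _ = |(n:ℝ)| := by push_cast; rfl

      have h9 : (9 : ℝ) ≤ (n : ℝ) ^ 2 := by
        nlinarith [abs_nonneg ((n:ℝ)), _root_.sq_abs ((n:ℝ))]
      rw [hd2]
      nlinarith [sq_nonneg (‖c n‖), norm_nonneg (c n)]
  have hts : 9 * ∑' n : ℤ, ‖c n‖ ^ 2 ≤ ∑' n : ℤ, ‖d n‖ ^ 2 := by
    rw [← tsum_mul_left]
    exact Summable.tsum_le_tsum hterm (hsummU.mul_left 9) hsummV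
  rw [hsumU, hsumV] at hts
  have hXg : (∫ x in (0:ℝ)..(2 * π), g x ^ 2) = ∫ x in (0:ℝ)..(2 * π), (p x - a₀) ^ 2 := by
    apply intervalIntegral.integral_congr
    intro x _
    simp [hg_def]
  rw [hXg] at hts
  set X := ∫ x in (0:ℝ)..(2 * π), (p x - a₀) ^ 2
  set Y := ∫ x in (0:ℝ)..(2 * π), (deriv p x) ^ 2
  have hmul := mul_le_mul_of_nonneg_left hts (le_of_lt hT)
  have he1 : (2 * π) * (9 * (1 / (2 * π) * X)) = 9 * X := by
    field_simp
  have he2 : (2 * π) * (1 / (2 * π) * Y) = Y := by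
    field_simp
  rw [he1, he2] at hmul
  exact hmul

end core

/-- Inequality (e17): for constant width sets, `(32/9)π(A − F) ≥ 16π δ₂(K)²`,
equivalently `∫ p'² ≥ 9 ∫ (p − a₀)²`. -/
theorem pedal_area_diff_ge_L2_distance_constant_width
    (p : ℝ → ℝ)
    (hper : Function.Periodic p (2 * π))
    (hC2 : ContDiff ℝ 2 p)
    (hcos : ∫ φ in (0:ℝ)..(2 * π), p φ * Real.cos φ = 0)
    (hsin : ∫ φ in (0:ℝ)..(2 * π), p φ * Real.sin φ = 0)
    (w : ℝ) (hwidth : ∀ φ, p φ + p (φ + π) = w)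
    (a₀ F A δ₂sq : ℝ)
    (ha₀ : a₀ = (1 / (2 * π)) * ∫ φ in (0:ℝ)..(2 * π), p φ)
    (hF : F = (1 / 2) * ∫ φ in (0:ℝ)..(2 * π), (p φ ^ 2 - (deriv p φ) ^ 2))
    (hA : A = (1 / 2) * ∫ φ in (0:ℝ)..(2 * π), p φ ^ 2)
    (hδ : δ₂sq = ∫ φ in (0:ℝ)..(2 * π), (p φ - a₀) ^ 2) :
    (32 / 9) * π * (A - F) ≥ 16 * π * δ₂sq ∧
      (∫ φ in (0:ℝ)..(2 * π), (deriv p φ) ^ 2) ≥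
        9 * ∫ φ in (0:ℝ)..(2 * π), (p φ - a₀) ^ 2 := by
  have hcore := wirtinger3 p hper hC2 hcos hsin w hwidth a₀ ha₀
  have hp_cont : Continuous p := hC2.continuous
  have hp'_cont : Continuous (deriv p) := hC2.continuous_deriv one_le_two
  refine ⟨?_, hcore⟩
  have hsplit : (∫ φ in (0:ℝ)..(2 * π), (p φ ^ 2 - (deriv p φ) ^ 2))
      = (∫ φ in (0:ℝ)..(2 * π), p φ ^ 2) - ∫ φ in (0:ℝ)..(2 * π), (deriv p φ) ^ 2 := by
    apply intervalIntegral.integral_sub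
    · exact ((hp_cont.pow 2).intervalIntegrable _ _)
    · exact ((hp'_cont.pow 2).intervalIntegrable _ _)
  have hAF : A - F = (1 / 2) * ∫ φ in (0:ℝ)..(2 * π), (deriv p φ) ^ 2 := by
    rw [hA, hF, hsplit]; ring
  rw [hAF, hδ]
  nlinarith [hcore, Real.pi_pos]
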